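/- The Stieltjes transform of the semicircle law σ satisfies G_σ(z) = (1/2)(z - √(z²-4)) for z > 2, and the R-transform of σ is R_σ(x) = x; in particular G_σ(R_σ(x) + 1/x) = x for 0 < x < 1. -/

import Mathlib

open MeasureTheory Real

open Set
open scoped NNReal ENNReal

lemma key_deriv (z : ℝ) (hz : 2 < z) (t : ℝ) (ht : t ∈ Ioo (-2:ℝ) 2) :
    HasDerivAt (fun t => z * arcsin (t/2) - Real.sqrt (4 - t^2)
      + Real.sqrt (z^2 - 4) * arcsin ((4 - z*t)/(2*(z-t))))
      (Real.sqrt (4 - t^2) / (z - t)) t := by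
  obtain ⟨ht1, ht2⟩ := ht
  have hzt : 0 < z - t := by linarith
  have h4t : 0 < 4 - t^2 := by nlinarith
  have hz4 : 0 < z^2 - 4 := by nlinarith
  have hs4t : 0 < Real.sqrt (4 - t^2) := Real.sqrt_pos.mpr h4t
  have hsz4 : 0 < Real.sqrt (z^2 - 4) := Real.sqrt_pos.mpr hz4
  -- term 1 : z * arcsin (t/2)
  have h1 : HasDerivAt (fun t : ℝ => z * arcsin (t/2)) (z / Real.sqrt (4 - t^2)) t := by
    have hin : HasDerivAt (fun t : ℝ => t/2) (1/2) t := (hasDerivAt_id t).div_const 2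
    have ha : HasDerivAt arcsin (1 / Real.sqrt (1 - (t/2)^2)) (t/2) :=
      Real.hasDerivAt_arcsin (by intro h; rw [div_eq_iff (by norm_num : (2:ℝ) ≠ 0)] at h; linarith)
        (by intro h; rw [div_eq_iff (by norm_num : (2:ℝ) ≠ 0)] at h; linarith)
    have := (ha.comp t hin).const_mul z
    refine this.congr_deriv ?_
    have h2 : Real.sqrt 4 = 2 := by
      rw [show (4:ℝ) = 2^2 by norm_num, Real.sqrt_sq (by norm_num)]
    have : Real.sqrt (1 - (t/2)^2) = Real.sqrt (4 - t^2) / 2 := by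
      rw [show (4 - t^2 : ℝ) = 4 * (1 - (t/2)^2) by ring,
        Real.sqrt_mul (by norm_num), h2]
      ring
    rw [this]
    field_simp
  -- term 2 : sqrt (4 - t^2)
  have h2 : HasDerivAt (fun t : ℝ => Real.sqrt (4 - t^2)) (-t / Real.sqrt (4 - t^2)) t := by
    have hin : HasDerivAt (fun t : ℝ => 4 - t^2) (-(2*t)) t := by
      have := ((hasDerivAt_pow 2 t).const_sub (4:ℝ))
      simpa using this
    have := (Real.hasDerivAt_sqrt (ne_of_gt h4t)).comp t hin
    refine this.congr_deriv ?_
    field_simp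
  -- term 3
  set u : ℝ → ℝ := fun t => (4 - z*t)/(2*(z-t)) with hu
  have hden : (2*(z-t)) ≠ 0 := by positivity
  have hu2 : 1 - (u t)^2 = (z^2-4)*(4-t^2)/(2*(z-t))^2 := by
    simp only [hu]
    field_simp
    ring
  have hupos : 0 < 1 - (u t)^2 := by
    rw [hu2]; positivity
  have hune1 : u t ≠ 1 := by
    intro h; rw [h] at hupos; norm_num at hupos
  have hunem1 : u t ≠ -1 := by
    intro h; rw [h] at hupos; norm_num at hupos
  have hsqrtu : Real.sqrt (1 - (u t)^2)
      = Real.sqrt (z^2-4) * Real.sqrt (4-t^2) / (2*(z-t)) := by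
    have hsq : (Real.sqrt (z^2-4) * Real.sqrt (4-t^2))^2 = (z^2-4)*(4-t^2) := by
      rw [mul_pow, Real.sq_sqrt hz4.le, Real.sq_sqrt h4t.le]
    rw [hu2, show (z^2-4)*(4-t^2)/(2*(z-t))^2
        = (Real.sqrt (z^2-4) * Real.sqrt (4-t^2) / (2*(z-t)))^2 by
      rw [div_pow, hsq],
      Real.sqrt_sq (by positivity)]
  have hud : HasDerivAt u (-(z^2-4)/(2*(z-t)^2)) t := by
    have hn : HasDerivAt (fun t : ℝ => 4 - z*t) (-z) t := by
      simpa using ((hasDerivAt_id t).const_mul z).const_sub (4:ℝ)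
    have hd : HasDerivAt (fun t : ℝ => 2*(z-t)) (-2) t := by
      simpa using ((hasDerivAt_id t).const_sub z).const_mul (2:ℝ)
    have := hn.div hd hden
    refine this.congr_deriv ?_
    field_simp
    ring
  have h3 : HasDerivAt (fun t => Real.sqrt (z^2 - 4) * arcsin (u t))
      (- (z^2-4) / ((z-t) * Real.sqrt (4-t^2))) t := by
    have ha : HasDerivAt arcsin (1 / Real.sqrt (1 - (u t)^2)) (u t) :=
      Real.hasDerivAt_arcsin hunem1 hune1
    have := ((ha.comp t hud).const_mul (Real.sqrt (z^2-4)))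
    refine this.congr_deriv ?_
    rw [hsqrtu]
    field_simp
  have := (h1.sub h2).add h3
  refine this.congr_deriv ?_
  have ha2 := Real.sq_sqrt h4t.le
  field_simp
  linear_combination (-1) * ha2

lemma key_int (z : ℝ) (hz : 2 < z) :
    ∫ t in (-2:ℝ)..2, Real.sqrt (4 - t^2) / (z - t)
      = π * (z - Real.sqrt (z^2 - 4)) := by
  set F : ℝ → ℝ := fun t => z * arcsin (t/2) - Real.sqrt (4 - t^2)
      + Real.sqrt (z^2 - 4) * arcsin ((4 - z*t)/(2*(z-t))) with hF
  have hne : ∀ t ∈ Icc (-2:ℝ) 2, 2*(z-t) ≠ 0 := by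
    intro t ht
    have := ht.2
    intro h
    have : z - t = 0 := by linarith [mul_eq_zero.mp h |>.resolve_left (by norm_num)]
    linarith
  have hcont : ContinuousOn F (Icc (-2:ℝ) 2) := by
    apply ContinuousOn.add
    · apply ContinuousOn.sub
      · exact (continuous_const.mul (Real.continuous_arcsin.comp
          (continuous_id.div_const 2))).continuousOn
      · exact (Real.continuous_sqrt.comp (by continuity)).continuousOn
    · apply ContinuousOn.mul continuousOn_const
      apply Real.continuous_arcsin.comp_continuousOn
      exact ContinuousOn.div (by fun_prop) (by fun_prop) hne
  have hderiv : ∀ t ∈ Ioo (-2:ℝ) 2,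
      HasDerivWithinAt F (Real.sqrt (4 - t^2) / (z - t)) (Ioi t) t :=
    fun t ht => (key_deriv z hz t ht).hasDerivWithinAt
  have hint : IntervalIntegrable (fun t => Real.sqrt (4 - t^2) / (z - t))
      volume (-2) 2 := by
    apply ContinuousOn.intervalIntegrable
    rw [uIcc_of_le (by norm_num)]
    exact ContinuousOn.div (Real.continuous_sqrt.comp (by continuity)).continuousOn
      (by fun_prop) (fun t ht => by have := ht.2; intro h; linarith)
  have := intervalIntegral.integral_eq_sub_of_hasDeriv_right_of_le (by norm_num)
    hcont hderiv hint
  rw [this, hF]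
  have hz2 : z - 2 ≠ 0 := by linarith
  have e1 : ((2:ℝ)/2) = 1 := by norm_num
  have e2 : ((-2:ℝ)/2) = -1 := by norm_num
  have e3 : (4 - z*2)/(2*(z-2)) = -1 := by
    rw [div_eq_iff (by intro h; apply hz2; linarith [mul_eq_zero.mp h |>.resolve_left (by norm_num : (2:ℝ) ≠ 0)])]
    ring
  have e4 : (4 - z*(-2))/(2*(z-(-2))) = 1 := by
    rw [div_eq_iff (by intro h; nlinarith [mul_eq_zero.mp h |>.resolve_left (by norm_num : (2:ℝ) ≠ 0)])]
    ring
  simp only [e1, e2, e3, e4, Real.arcsin_one, Real.arcsin_neg_one]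
  rw [show (4 - (2:ℝ)^2) = 0 by norm_num, show (4 - (-2:ℝ)^2) = 0 by norm_num,
    Real.sqrt_zero]
  ring

lemma stieltjes_main (σ : Measure ℝ)
    (hσ : σ = (volume.restrict (Set.Icc (-2 : ℝ) 2)).withDensity
      (fun x => ENNReal.ofReal ((1 / (2 * Real.pi)) * Real.sqrt (4 - x ^ 2))))
    (z : ℝ) (hz : 2 < z) :
    (∫ t, (z - t)⁻¹ ∂σ) = (z - Real.sqrt (z ^ 2 - 4)) / 2 := by
  subst hσ
  have hc : ∀ x : ℝ, 0 ≤ (1 / (2 * Real.pi)) * Real.sqrt (4 - x ^ 2) := by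
    intro x
    have := Real.pi_pos
    positivity
  have hmeas : Measurable (fun x : ℝ =>
      ((1 / (2 * Real.pi)) * Real.sqrt (4 - x ^ 2)).toNNReal) :=
    (measurable_const.mul (Real.continuous_sqrt.measurable.comp (by fun_prop))).real_toNNReal
  have h1 : (fun x : ℝ => ENNReal.ofReal ((1 / (2 * Real.pi)) * Real.sqrt (4 - x ^ 2)))
      = fun x : ℝ => (((1 / (2 * Real.pi)) * Real.sqrt (4 - x ^ 2)).toNNReal : ℝ≥0∞) := rfl
  rw [h1, integral_withDensity_eq_integral_smul hmeas]
  have h2 : ∀ x : ℝ, (((1 / (2 * Real.pi)) * Real.sqrt (4 - x ^ 2)).toNNReal : ℝ≥0)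
      • (z - x)⁻¹ = (1 / (2 * Real.pi)) * (Real.sqrt (4 - x ^ 2) / (z - x)) := by
    intro x
    rw [NNReal.smul_def, smul_eq_mul, Real.coe_toNNReal _ (hc x)]
    ring
  simp_rw [h2]
  rw [MeasureTheory.integral_Icc_eq_integral_Ioc,
    ← intervalIntegral.integral_of_le (by norm_num : (-2:ℝ) ≤ 2),
    intervalIntegral.integral_const_mul, key_int z hz]
  have hpi := Real.pi_ne_zero
  field_simp


/-- The Stieltjes transform of the semicircle law is `G_σ(z) = (z - √(z²-4))/2` for `z > 2`,
and the R-transform of `σ` is `R_σ(x) = x`: `G_σ(x + 1/x) = x` for `0 < x < 1`. -/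
theorem semicircle_stieltjes_and_R_transform
    (σ : Measure ℝ)
    (hσ : σ = (volume.restrict (Set.Icc (-2 : ℝ) 2)).withDensity
      (fun x => ENNReal.ofReal ((1 / (2 * Real.pi)) * Real.sqrt (4 - x ^ 2)))) :
    (∀ z : ℝ, 2 < z →
      (∫ t, (z - t)⁻¹ ∂σ) = (z - Real.sqrt (z ^ 2 - 4)) / 2) ∧
    (∀ x : ℝ, 0 < x → x < 1 →
      (∫ t, (x + x⁻¹ - t)⁻¹ ∂σ) = x) := by
  constructor
  · exact fun z hz => stieltjes_main σ hσ z hz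
  · intro x hx0 hx1
    have hxne : x ≠ 0 := ne_of_gt hx0
    have hz : 2 < x + x⁻¹ := by
      rw [show x + x⁻¹ = (x^2 + 1)/x by field_simp]
      rw [lt_div_iff₀ hx0]
      nlinarith [sq_nonneg (x - 1)]
    rw [stieltjes_main σ hσ _ hz]
    have h1 : (x + x⁻¹)^2 - 4 = (x⁻¹ - x)^2 := by
      field_simp
      ring
    have h2 : (0:ℝ) ≤ x⁻¹ - x := by
      have : x < x⁻¹ := by
        rw [lt_inv_comm₀ hx0 (by positivity)]
        nlinarith
      linarith
    rw [h1, Real.sqrt_sq h2]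
    ring
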